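/- Let (i,j) be an isoclinism between groups G1 (with center Z1) and G2 (with center Z2). Let H1 be a subgroup of G1 containing Z1, and let H2 be the preimage under the quotient map G2 → G2/Z2 of the image i(H1/Z1). Then H2 is a subgroup of G2 containing Z2, and H1 and H2 are isoclinic. -/

import Mathlib

open scoped commutatorElement

/-- Two groups `G₁`, `G₂` with centers `Z₁`, `Z₂` are *isoclinic* if there are
isomorphisms `i : G₁/Z₁ ≃ G₂/Z₂` and `j : [G₁,G₁] ≃ [G₂,G₂]` compatible with the
commutator maps: whenever `x'Z₂ = i(xZ₁)` and `y'Z₂ = i(yZ₁)` one has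
`j([x,y]) = [x',y']`. -/
def IsIsoclinic (G₁ G₂ : Type*) [Group G₁] [Group G₂] : Prop :=
  ∃ (i : (G₁ ⧸ Subgroup.center G₁) ≃* (G₂ ⧸ Subgroup.center G₂))
    (j : commutator G₁ ≃* commutator G₂),
    ∀ (x y : G₁) (x' y' : G₂),
      (QuotientGroup.mk x' : G₂ ⧸ Subgroup.center G₂) = i (QuotientGroup.mk x) →
      (QuotientGroup.mk y' : G₂ ⧸ Subgroup.center G₂) = i (QuotientGroup.mk y) →
      (j ⟨⁅x, y⁆, Subgroup.commutator_mem_commutator (Subgroup.mem_top x)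
          (Subgroup.mem_top y)⟩ : G₂) = ⁅x', y'⁆

private lemma comm_central_left {G : Type*} [Group G] {z : G}
    (hz : z ∈ Subgroup.center G) (a b : G) : ⁅a * z, b⁆ = ⁅a, b⁆ := by
  have hc : z * b = b * z := (Subgroup.mem_center_iff.mp hz b).symm
  rw [commutatorElement_def, commutatorElement_def, mul_inv_rev, mul_assoc a z b, hc]
  group

private lemma comm_central {G : Type*} [Group G] {z w : G}
    (hz : z ∈ Subgroup.center G) (hw : w ∈ Subgroup.center G) (a b : G) :
    ⁅a * z, b * w⁆ = ⁅a, b⁆ := by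
  rw [comm_central_left hz]
  rw [show ⁅a, b * w⁆ = ⁅b * w, a⁆⁻¹ by rw [commutatorElement_inv],
    comm_central_left hw, ← commutatorElement_inv, inv_inv]

private lemma hZcen {G : Type*} [Group G] (K : Subgroup G) (v : K)
    (hv : (v : G) ∈ Subgroup.center G) : v ∈ Subgroup.center K := by
  rw [Subgroup.mem_center_iff]
  intro g
  exact Subtype.ext (Subgroup.mem_center_iff.mp hv (g : G))

/-- Let `(i,j)` be an isoclinism between groups `G₁` (with center `Z₁`)
and `G₂` (with center `Z₂`).  Let `H₁` be a subgroup of `G₁` containing `Z₁`, and let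
`H₂` be the preimage under the quotient map `G₂ → G₂/Z₂` of the image `i(H₁/Z₁)`.  Then
`H₂` is a subgroup of `G₂` containing `Z₂`, and `H₁` and `H₂` are isoclinic. -/
theorem corresponding_subgroups_isoclinic
    (G₁ G₂ : Type*) [Group G₁] [Group G₂]
    (i : (G₁ ⧸ Subgroup.center G₁) ≃* (G₂ ⧸ Subgroup.center G₂))
    (j : commutator G₁ ≃* commutator G₂)
    (hij : ∀ (x y : G₁) (x' y' : G₂),
      (QuotientGroup.mk x' : G₂ ⧸ Subgroup.center G₂) = i (QuotientGroup.mk x) →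
      (QuotientGroup.mk y' : G₂ ⧸ Subgroup.center G₂) = i (QuotientGroup.mk y) →
      (j ⟨⁅x, y⁆, Subgroup.commutator_mem_commutator (Subgroup.mem_top x)
          (Subgroup.mem_top y)⟩ : G₂) = ⁅x', y'⁆)
    (H₁ : Subgroup G₁) (hH₁ : Subgroup.center G₁ ≤ H₁) :
    Subgroup.center G₂ ≤
      Subgroup.comap (QuotientGroup.mk' (Subgroup.center G₂))
        (Subgroup.map i.toMonoidHom
          (Subgroup.map (QuotientGroup.mk' (Subgroup.center G₁)) H₁)) ∧
    IsIsoclinic ↥H₁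
      ↥(Subgroup.comap (QuotientGroup.mk' (Subgroup.center G₂))
        (Subgroup.map i.toMonoidHom
          (Subgroup.map (QuotientGroup.mk' (Subgroup.center G₁)) H₁))) := by
  classical
  set H₂ : Subgroup G₂ := Subgroup.comap (QuotientGroup.mk' (Subgroup.center G₂))
        (Subgroup.map i.toMonoidHom
          (Subgroup.map (QuotientGroup.mk' (Subgroup.center G₁)) H₁)) with hH₂def
  have memH₂ : ∀ x : G₂, x ∈ H₂ ↔
      ∃ h ∈ H₁, i (QuotientGroup.mk h) = QuotientGroup.mk x := by
    intro x
    simp [hH₂def, Subgroup.mem_comap, Subgroup.mem_map, QuotientGroup.mk'_apply]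
  choose lft hlft using fun (h : G₁) =>
    QuotientGroup.mk_surjective (i (QuotientGroup.mk h : G₁ ⧸ Subgroup.center G₁))
  choose bck hbck using fun (x : G₂) =>
    QuotientGroup.mk_surjective (i.symm (QuotientGroup.mk x : G₂ ⧸ Subgroup.center G₂))
  have hlftH₂ : ∀ h ∈ H₁, lft h ∈ H₂ := fun h hh => (memH₂ _).mpr ⟨h, hh, (hlft h).symm⟩
  have hbckH₁ : ∀ x ∈ H₂, bck x ∈ H₁ := by
    intro x hx
    obtain ⟨h, hh, hhx⟩ := (memH₂ x).mp hx
    have e : (QuotientGroup.mk h : G₁ ⧸ Subgroup.center G₁) = QuotientGroup.mk (bck x) := by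
      rw [hbck x, ← hhx, MulEquiv.symm_apply_apply]
    have hz : h⁻¹ * bck x ∈ Subgroup.center G₁ := QuotientGroup.eq.mp e
    simpa using H₁.mul_mem hh (hH₁ hz)
  have hibck : ∀ x : G₂, i (QuotientGroup.mk (bck x)) = QuotientGroup.mk x := by
    intro x; rw [hbck x, MulEquiv.apply_symm_apply]
  have hcomm : ∀ x y : G₁,
      (j ⟨⁅x, y⁆, Subgroup.commutator_mem_commutator (Subgroup.mem_top x)
          (Subgroup.mem_top y)⟩ : G₂) = ⁅lft x, lft y⁆ :=
    fun x y => hij x y _ _ (hlft x) (hlft y)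
  have hZ₂le : Subgroup.center G₂ ≤ H₂ := by
    intro z hz
    refine (memH₂ z).mpr ⟨1, H₁.one_mem, ?_⟩
    rw [(QuotientGroup.eq_one_iff z).mpr hz]
    simp
  -- center correspondence
  have hcent : ∀ (h : G₁) (hh : h ∈ H₁),
      ((⟨h, hh⟩ : H₁) ∈ Subgroup.center H₁ ↔
        (⟨lft h, hlftH₂ h hh⟩ : H₂) ∈ Subgroup.center H₂) := by
    intro h hh
    constructor
    · intro hc
      rw [Subgroup.mem_center_iff]
      rintro ⟨v, hv⟩
      obtain ⟨k, hk, hkv⟩ := (memH₂ v).mp hv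
      have h1 : ⁅h, k⁆ = 1 := by
        rw [commutatorElement_eq_one_iff_mul_comm]
        exact congrArg Subtype.val (Subgroup.mem_center_iff.mp hc ⟨k, hk⟩).symm
      have h2 := hij h k (lft h) v (hlft h) hkv.symm
      have h3 : (⟨⁅h, k⁆, Subgroup.commutator_mem_commutator (Subgroup.mem_top h)
          (Subgroup.mem_top k)⟩ : commutator G₁) = 1 := Subtype.ext h1
      rw [h3, map_one] at h2
      have h4 : ⁅lft h, v⁆ = 1 := by simpa using h2.symm
      exact Subtype.ext (commutatorElement_eq_one_iff_mul_comm.mp h4).symm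
    · intro hc
      rw [Subgroup.mem_center_iff]
      rintro ⟨k, hk⟩
      have h2 := hcomm h k
      have h4 : ⁅lft h, lft k⁆ = 1 := by
        rw [commutatorElement_eq_one_iff_mul_comm]
        exact congrArg Subtype.val
          (Subgroup.mem_center_iff.mp hc ⟨lft k, hlftH₂ k hk⟩).symm
      have h5 : (j ⟨⁅h, k⁆, Subgroup.commutator_mem_commutator (Subgroup.mem_top h)
          (Subgroup.mem_top k)⟩) = (1 : commutator G₂) := Subtype.ext (h2.trans h4)
      have h6 := j.injective (h5.trans (map_one j.toMonoidHom).symm)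
      have h7 : ⁅h, k⁆ = 1 := congrArg Subtype.val h6
      exact Subtype.ext (commutatorElement_eq_one_iff_mul_comm.mp h7).symm
  -- the homomorphism H₁ → H₂ ⧸ Z(H₂)
  have hfmul : ∀ a b : H₁,
      (QuotientGroup.mk (⟨lft ↑(a * b), hlftH₂ _ (a * b).2⟩ : H₂)
        : H₂ ⧸ Subgroup.center H₂) =
      QuotientGroup.mk ((⟨lft ↑a, hlftH₂ _ a.2⟩ : H₂) * ⟨lft ↑b, hlftH₂ _ b.2⟩) := by
    intro a b
    have e1 : (QuotientGroup.mk (lft (↑a * ↑b)) : G₂ ⧸ Subgroup.center G₂) =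
        QuotientGroup.mk (lft ↑a * lft ↑b) := by
      rw [hlft, QuotientGroup.mk_mul, QuotientGroup.mk_mul, hlft, hlft, ← map_mul]
    refine QuotientGroup.eq.mpr (hZcen H₂ _ ?_)
    exact QuotientGroup.eq.mp e1
  set f : H₁ →* H₂ ⧸ Subgroup.center H₂ :=
    MonoidHom.mk' (fun h => QuotientGroup.mk ⟨lft ↑h, hlftH₂ _ h.2⟩) hfmul with hfdef
  have hfker : ∀ h : H₁, h ∈ Subgroup.center H₁ → f h = 1 := by
    intro h hh
    exact (QuotientGroup.eq_one_iff _).mpr ((hcent ↑h h.2).mp hh)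
  set fbar : (H₁ ⧸ Subgroup.center H₁) →* H₂ ⧸ Subgroup.center H₂ :=
    QuotientGroup.lift (Subgroup.center H₁) f hfker with hfbardef
  have hfbar_mk : ∀ h : H₁, fbar (QuotientGroup.mk h) = f h := fun h => rfl
  have hinj : Function.Injective fbar := by
    rw [injective_iff_map_eq_one]
    intro q hq
    induction q using QuotientGroup.induction_on with
    | H h =>
      rw [hfbar_mk] at hq
      have : (⟨lft ↑h, hlftH₂ _ h.2⟩ : H₂) ∈ Subgroup.center H₂ :=
        (QuotientGroup.eq_one_iff _).mp hq
      exact (QuotientGroup.eq_one_iff _).mpr ((hcent ↑h h.2).mpr this)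
  have hsurjf : Function.Surjective fbar := by
    intro q
    induction q using QuotientGroup.induction_on with
    | H v =>
      refine ⟨QuotientGroup.mk ⟨bck ↑v, hbckH₁ _ v.2⟩, ?_⟩
      rw [hfbar_mk]
      refine QuotientGroup.eq.mpr (hZcen H₂ _ ?_)
      refine QuotientGroup.eq.mp (?_ :
        (QuotientGroup.mk (lft (bck ↑v)) : G₂ ⧸ Subgroup.center G₂) = QuotientGroup.mk ↑v)
      rw [hlft, hibck]
  set i' : (H₁ ⧸ Subgroup.center H₁) ≃* (H₂ ⧸ Subgroup.center H₂) :=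
    MulEquiv.ofBijective fbar ⟨hinj, hsurjf⟩ with hi'def
  -- commutator subgroup correspondence
  have hsub₁ : ⁅H₁, H₁⁆ ≤ commutator G₁ := Subgroup.commutator_mono le_top le_top
  have hsub₂ : ⁅H₂, H₂⁆ ≤ commutator G₂ := Subgroup.commutator_mono le_top le_top
  have hmap₁ : Subgroup.map H₁.subtype (commutator ↥H₁) = ⁅H₁, H₁⁆ := by
    rw [commutator, Subgroup.map_commutator, ← MonoidHom.range_eq_map, Subgroup.range_subtype]
  have hmap₂ : Subgroup.map H₂.subtype (commutator ↥H₂) = ⁅H₂, H₂⁆ := by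
    rw [commutator, Subgroup.map_commutator, ← MonoidHom.range_eq_map, Subgroup.range_subtype]
  have hmemc₁ : ∀ h : H₁, h ∈ commutator ↥H₁ ↔ (h : G₁) ∈ ⁅H₁, H₁⁆ := by
    intro h
    rw [← hmap₁]
    exact (Subgroup.mem_map_iff_mem H₁.subtype_injective).symm
  have hmemc₂ : ∀ h : H₂, h ∈ commutator ↥H₂ ↔ (h : G₂) ∈ ⁅H₂, H₂⁆ := by
    intro h
    rw [← hmap₂]
    exact (Subgroup.mem_map_iff_mem H₂.subtype_injective).symm
  have hJfwd : ∀ (v : G₁), v ∈ ⁅H₁, H₁⁆ → ∀ (hc : v ∈ commutator G₁),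
      ((j ⟨v, hc⟩ : commutator G₂) : G₂) ∈ ⁅H₂, H₂⁆ := by
    intro v hv
    refine Subgroup.closure_induction ?_ ?_ ?_ ?_ hv
    · rintro x ⟨g, hg, k, hk, rfl⟩ hc
      have he : (⟨⁅g, k⁆, hc⟩ : commutator G₁) =
          ⟨⁅g, k⁆, Subgroup.commutator_mem_commutator (Subgroup.mem_top g)
            (Subgroup.mem_top k)⟩ := rfl
      rw [he, hcomm g k]
      exact Subgroup.commutator_mem_commutator (hlftH₂ g hg) (hlftH₂ k hk)
    · intro hc
      have he : (⟨(1 : G₁), hc⟩ : commutator G₁) = 1 := rfl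
      rw [he, map_one]
      simpa using Subgroup.one_mem _
    · intro x y hx hy ihx ihy hc
      have hxc : x ∈ commutator G₁ := hsub₁ hx
      have hyc : y ∈ commutator G₁ := hsub₁ hy
      have he : (⟨x * y, hc⟩ : commutator G₁) = ⟨x, hxc⟩ * ⟨y, hyc⟩ := rfl
      rw [he, map_mul]
      exact Subgroup.mul_mem _ (ihx hxc) (ihy hyc)
    · intro x hx ihx hc
      have hxc : x ∈ commutator G₁ := hsub₁ hx
      have he : (⟨x⁻¹, hc⟩ : commutator G₁) = (⟨x, hxc⟩)⁻¹ := rfl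
      rw [he, map_inv]
      simpa using Subgroup.inv_mem _ (ihx hxc)
  have hJbwd : ∀ (v : G₂), v ∈ ⁅H₂, H₂⁆ → ∀ (hc : v ∈ commutator G₂),
      ((j.symm ⟨v, hc⟩ : commutator G₁) : G₁) ∈ ⁅H₁, H₁⁆ := by
    intro v hv
    refine Subgroup.closure_induction ?_ ?_ ?_ ?_ hv
    · rintro x ⟨g, hg, k, hk, rfl⟩ hc
      have h2 := hij (bck g) (bck k) g k (hibck g).symm (hibck k).symm
      have he : (⟨⁅g, k⁆, hc⟩ : commutator G₂) =
          j ⟨⁅bck g, bck k⁆, Subgroup.commutator_mem_commutator (Subgroup.mem_top _)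
            (Subgroup.mem_top _)⟩ := Subtype.ext h2.symm
      rw [he, MulEquiv.symm_apply_apply]
      exact Subgroup.commutator_mem_commutator (hbckH₁ g hg) (hbckH₁ k hk)
    · intro hc
      have he : (⟨(1 : G₂), hc⟩ : commutator G₂) = 1 := rfl
      rw [he, map_one]
      simpa using Subgroup.one_mem _
    · intro x y hx hy ihx ihy hc
      have hxc : x ∈ commutator G₂ := hsub₂ hx
      have hyc : y ∈ commutator G₂ := hsub₂ hy
      have he : (⟨x * y, hc⟩ : commutator G₂) = ⟨x, hxc⟩ * ⟨y, hyc⟩ := rfl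
      rw [he, map_mul]
      exact Subgroup.mul_mem _ (ihx hxc) (ihy hyc)
    · intro x hx ihx hc
      have hxc : x ∈ commutator G₂ := hsub₂ hx
      have he : (⟨x⁻¹, hc⟩ : commutator G₂) = (⟨x, hxc⟩)⁻¹ := rfl
      rw [he, map_inv]
      simpa using Subgroup.inv_mem _ (ihx hxc)
  have hcle₂ : ⁅H₂, H₂⁆ ≤ H₂ := Subgroup.commutator_le.mpr fun a ha b hb => by
    rw [commutatorElement_def]
    exact H₂.mul_mem (H₂.mul_mem (H₂.mul_mem ha hb) (H₂.inv_mem ha)) (H₂.inv_mem hb)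
  have hcle₁ : ⁅H₁, H₁⁆ ≤ H₁ := Subgroup.commutator_le.mpr fun a ha b hb => by
    rw [commutatorElement_def]
    exact H₁.mul_mem (H₁.mul_mem (H₁.mul_mem ha hb) (H₁.inv_mem ha)) (H₁.inv_mem hb)
  set Jf : commutator ↥H₁ → commutator ↥H₂ := fun x =>
    ⟨⟨(j ⟨((x : ↥H₁) : G₁), hsub₁ ((hmemc₁ _).mp x.2)⟩ : G₂),
        hcle₂ (hJfwd _ ((hmemc₁ _).mp x.2) _)⟩,
      (hmemc₂ _).mpr (hJfwd _ ((hmemc₁ _).mp x.2) _)⟩ with hJfdef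
  set Jg : commutator ↥H₂ → commutator ↥H₁ := fun x =>
    ⟨⟨(j.symm ⟨((x : ↥H₂) : G₂), hsub₂ ((hmemc₂ _).mp x.2)⟩ : G₁),
        hcle₁ (hJbwd _ ((hmemc₂ _).mp x.2) _)⟩,
      (hmemc₁ _).mpr (hJbwd _ ((hmemc₂ _).mp x.2) _)⟩ with hJgdef
  have hJleft : ∀ x, Jg (Jf x) = x := by
    intro x
    apply Subtype.ext
    apply Subtype.ext
    show (j.symm ⟨(j ⟨((x : ↥H₁) : G₁), _⟩ : G₂), _⟩ : G₁) = ((x : ↥H₁) : G₁)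
    rw [show (⟨(j ⟨((x : ↥H₁) : G₁), hsub₁ ((hmemc₁ _).mp x.2)⟩ : G₂), _⟩ : commutator G₂) =
        j ⟨((x : ↥H₁) : G₁), hsub₁ ((hmemc₁ _).mp x.2)⟩ from rfl,
      MulEquiv.symm_apply_apply]
  have hJright : ∀ x, Jf (Jg x) = x := by
    intro x
    apply Subtype.ext
    apply Subtype.ext
    show (j ⟨(j.symm ⟨((x : ↥H₂) : G₂), _⟩ : G₁), _⟩ : G₂) = ((x : ↥H₂) : G₂)
    rw [show (⟨(j.symm ⟨((x : ↥H₂) : G₂), hsub₂ ((hmemc₂ _).mp x.2)⟩ : G₁), _⟩ : commutator G₁) =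
        j.symm ⟨((x : ↥H₂) : G₂), hsub₂ ((hmemc₂ _).mp x.2)⟩ from rfl,
      MulEquiv.apply_symm_apply]
  have hJmul : ∀ x y, Jf (x * y) = Jf x * Jf y := by
    intro x y
    apply Subtype.ext
    apply Subtype.ext
    show (j ⟨((((x * y) : commutator ↥H₁) : ↥H₁) : G₁), _⟩ : G₂) = _
    rw [show (⟨((((x * y) : commutator ↥H₁) : ↥H₁) : G₁), hsub₁ ((hmemc₁ _).mp (x * y).2)⟩
        : commutator G₁) =
        ⟨((x : ↥H₁) : G₁), hsub₁ ((hmemc₁ _).mp x.2)⟩ *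
        ⟨((y : ↥H₁) : G₁), hsub₁ ((hmemc₁ _).mp y.2)⟩ from rfl,
      map_mul]
    rfl
  set J : commutator ↥H₁ ≃* commutator ↥H₂ :=
    { toFun := Jf, invFun := Jg, left_inv := hJleft, right_inv := hJright,
      map_mul' := hJmul } with hJdef
  refine ⟨hZ₂le, i', J, ?_⟩
  intro x y x' y' hx' hy'
  have hx'' : (QuotientGroup.mk (⟨lft ↑x, hlftH₂ _ x.2⟩ : H₂)
      : H₂ ⧸ Subgroup.center H₂) = QuotientGroup.mk x' := by
    rw [hx']; rfl
  have hy'' : (QuotientGroup.mk (⟨lft ↑y, hlftH₂ _ y.2⟩ : H₂)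
      : H₂ ⧸ Subgroup.center H₂) = QuotientGroup.mk y' := by
    rw [hy']; rfl
  have hzx : (⟨lft ↑x, hlftH₂ _ x.2⟩ : H₂)⁻¹ * x' ∈ Subgroup.center H₂ :=
    QuotientGroup.eq.mp hx''
  have hzy : (⟨lft ↑y, hlftH₂ _ y.2⟩ : H₂)⁻¹ * y' ∈ Subgroup.center H₂ :=
    QuotientGroup.eq.mp hy''
  have hx0 : x' = (⟨lft ↑x, hlftH₂ _ x.2⟩ : H₂) * ((⟨lft ↑x, hlftH₂ _ x.2⟩ : H₂)⁻¹ * x') := by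
    rw [mul_inv_cancel_left]
  have hy0 : y' = (⟨lft ↑y, hlftH₂ _ y.2⟩ : H₂) * ((⟨lft ↑y, hlftH₂ _ y.2⟩ : H₂)⁻¹ * y') := by
    rw [mul_inv_cancel_left]
  have hcm : ⁅x', y'⁆ = ⁅(⟨lft ↑x, hlftH₂ _ x.2⟩ : H₂), ⟨lft ↑y, hlftH₂ _ y.2⟩⁆ := by
    conv_lhs => rw [hx0, hy0]
    exact comm_central hzx hzy _ _
  rw [hcm]
  exact Subtype.ext (hcomm ↑x ↑y)
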